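/- arXiv:2004.09161 — 2 statements merged into one kernel-verified Lean document; each statement's English description precedes it below -/
import Mathlib

section
/- Let h, g : ℤ → ℝ be finitely supported filters satisfying ∑_{l∈ℤ} h_l h_{l+2k} = (1/2)·δ_{k,0}, ∑_{l∈ℤ} g_l g_{l+2k} = (1/2)·δ_{k,0}, and ∑_{l∈ℤ} g_l h_{l+2k} = 0 for every integer k. Then the wavelet packet filters in distinct frequency sub-bands at the same scale are orthogonal under all 2^m-shifts: for every m ≥ 1, all 0 ≤ n₁, n₂ ≤ 2^m − 1 with n₁ ≠ n₂, and every integer k, ∑_{l∈ℤ} v_{m,n₁,l} v_{m,n₂,l+2^m k} = 0. -/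
open MeasureTheory ProbabilityTheory Filter

/-- Filter selector `u_n`: equals `g` if `n mod 4 ∈ {0,3}` and `h` if `n mod 4 ∈ {1,2}`. -/
noncomputable def uF (g h : ℤ → ℝ) (n : ℕ) : ℤ → ℝ :=
  fun l => if n % 4 = 0 ∨ n % 4 = 3 then g l else h l

/-- MODWPT wavelet packet filters `v_{m,n}`, defined recursively by `v_{1,0} = g`,
`v_{1,1} = h`, and `v_{m,n,l} = ∑_k u_{n,k} v_{m-1, ⌊n/2⌋, l - 2^(m-1) k}`. -/
noncomputable def wp (g h : ℤ → ℝ) : ℕ → ℕ → ℤ → ℝ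
  | 0, _, _ => 0
  | 1, n, l => if n = 0 then g l else h l
  | (m + 2), n, l => ∑ᶠ k : ℤ, uF g h n k * wp g h (m + 1) (n / 2) (l - 2 ^ (m + 1) * k)

open Function

lemma uF_eq (g h : ℤ → ℝ) (n : ℕ) : uF g h n = g ∨ uF g h n = h := by
  unfold uF; by_cases hc : n % 4 = 0 ∨ n % 4 = 3 <;> simp [hc]

lemma uF_fin (g h : ℤ → ℝ) (hgfin : (support g).Finite) (hhfin : (support h).Finite)
    (n : ℕ) : (support (uF g h n)).Finite := by
  rcases uF_eq g h n with e | e <;> rw [e] <;> assumption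

lemma uF_sibling (g h : ℤ → ℝ) (n₁ n₂ : ℕ) (hne : n₁ ≠ n₂) (hdiv : n₁ / 2 = n₂ / 2) :
    (uF g h n₁ = g ∧ uF g h n₂ = h) ∨ (uF g h n₁ = h ∧ uF g h n₂ = g) := by
  have h4 : ((n₁ % 4 = 0 ∨ n₁ % 4 = 3) ∧ ¬(n₂ % 4 = 0 ∨ n₂ % 4 = 3)) ∨
      (¬(n₁ % 4 = 0 ∨ n₁ % 4 = 3) ∧ (n₂ % 4 = 0 ∨ n₂ % 4 = 3)) := by omega
  unfold uF
  rcases h4 with ⟨h1, h2⟩ | ⟨h1, h2⟩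
  · left; constructor <;> funext l <;> simp [h1, h2]
  · right; constructor <;> funext l <;> simp [h1, h2]

lemma wp_fin (g h : ℤ → ℝ) (hgfin : (support g).Finite) (hhfin : (support h).Finite) :
    ∀ m n, (support (wp g h m n)).Finite := by
  intro m
  induction m with
  | zero => intro n; simp [wp, support_eq_empty_iff]
  | succ m ih =>
    intro n
    match m with
    | 0 =>
      apply Set.Finite.subset (hgfin.union hhfin)
      intro l hl
      rw [mem_support] at hl
      simp only [wp] at hl
      by_cases hn : n = 0
      · rw [if_pos hn] at hl; exact Set.mem_union_left _ hl
      · rw [if_neg hn] at hl; exact Set.mem_union_right _ hl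
    | Nat.succ m =>
      have hfin : ((fun p : ℤ × ℤ => p.2 + 2 ^ (m + 1) * p.1) ''
          ((support (uF g h n)) ×ˢ (support (wp g h (m + 1) (n / 2))))).Finite :=
        (((uF_fin g h hgfin hhfin n).prod (ih _))).image _
      apply hfin.subset
      intro l hl
      rw [mem_support] at hl
      simp only [wp] at hl
      by_contra hcon
      apply hl
      apply finsum_eq_zero_of_forall_eq_zero
      intro k
      by_contra hterm
      apply hcon
      have hu : uF g h n k ≠ 0 := fun h0 => hterm (by rw [h0]; ring)
      have hw : wp g h (m + 1) (n / 2) (l - 2 ^ (m + 1) * k) ≠ 0 :=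
        fun h0 => hterm (by rw [h0]; ring)
      exact ⟨(k, l - 2 ^ (m + 1) * k), ⟨hu, hw⟩, by simp⟩

lemma finsum_shift (f : ℤ → ℝ) (d : ℤ) : ∑ᶠ l, f (l + d) = ∑ᶠ l, f l :=
  finsum_comp_equiv (Equiv.addRight d)

lemma key (h g : ℤ → ℝ)
    (hhfin : (Function.support h).Finite) (hgfin : (Function.support g).Finite)
    (horth_h : ∀ k : ℤ,
      ∑ᶠ l : ℤ, h l * h (l + 2 * k) = (1 / 2) * (if k = 0 then 1 else 0))
    (horth_g : ∀ k : ℤ,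
      ∑ᶠ l : ℤ, g l * g (l + 2 * k) = (1 / 2) * (if k = 0 then 1 else 0))
    (horth_gh : ∀ k : ℤ, ∑ᶠ l : ℤ, g l * h (l + 2 * k) = 0) :
    ∀ m, 1 ≤ m → ∀ n₁ n₂ : ℕ, n₁ ≤ 2 ^ m - 1 → n₂ ≤ 2 ^ m - 1 → ∀ k : ℤ,
      ∑ᶠ l : ℤ, wp g h m n₁ l * wp g h m n₂ (l + 2 ^ m * k)
        = if n₁ = n₂ ∧ k = 0 then (1 / 2 : ℝ) ^ m else 0 := by
  have horth_hg : ∀ k : ℤ, ∑ᶠ l : ℤ, h l * g (l + 2 * k) = 0 := by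
    intro k
    have hcal : ∀ l : ℤ, h l * g (l + 2 * k)
        = (fun l => g l * h (l + 2 * (-k))) (l + 2 * k) := by
      intro l
      simp only
      have e1 : l + 2 * k + 2 * (-k) = l := by ring
      rw [e1]; ring
    calc ∑ᶠ l : ℤ, h l * g (l + 2 * k)
        = ∑ᶠ l : ℤ, (fun l => g l * h (l + 2 * (-k))) (l + 2 * k) :=
          finsum_congr hcal
      _ = ∑ᶠ l : ℤ, g l * h (l + 2 * (-k)) := by
          simpa using finsum_shift (fun l => g l * h (l + 2 * (-k))) (2 * k)
      _ = 0 := horth_gh (-k)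
  intro m
  induction m with
  | zero => omega
  | succ m ih =>
    intro _ n₁ n₂ hn₁ hn₂ k
    match m, ih with
    | 0, _ =>
      norm_num at hn₁ hn₂
      have h2 : ∀ l : ℤ, l + (2 : ℤ) ^ 1 * k = l + 2 * k := fun l => by ring
      interval_cases n₁ <;> interval_cases n₂ <;> simp only [wp] <;> norm_num <;>
        [rw [horth_g k]; rw [horth_gh k]; rw [horth_hg k]; rw [horth_h k]] <;>
        split_ifs <;> norm_num
    | Nat.succ m', ih =>
      have ih' := ih (by omega)
      have hpow0 : (2 : ℕ) ^ (m' + 1 + 1) = 2 * 2 ^ (m' + 1) := by ring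
      have hbt₁ : n₁ / 2 ≤ 2 ^ (m' + 1) - 1 := by omega
      have hbt₂ : n₂ / 2 ≤ 2 ^ (m' + 1) - 1 := by omega
      set M := m' + 1 with hM
      set c : ℤ := 2 ^ M with hc
      set t₁ := n₁ / 2 with ht₁
      set t₂ := n₂ / 2 with ht₂
      set u₁ := uF g h n₁ with hu₁
      set u₂ := uF g h n₂ with hu₂
      set w₁ := wp g h M t₁ with hw₁
      set w₂ := wp g h M t₂ with hw₂
      have hpow : (2 : ℕ) ^ (M + 1) = 2 * 2 ^ M := by ring
      have hufin : ∀ n, (support (uF g h n)).Finite := uF_fin g h hgfin hhfin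
      have hwfin : ∀ m n, (support (wp g h m n)).Finite := wp_fin g h hgfin hhfin
      set A : Finset ℤ := (hufin n₁).toFinset with hA
      set B : Finset ℤ := (hufin n₂).toFinset with hB
      set W : Finset ℤ := (hwfin M t₁).toFinset with hW
      set L : Finset ℤ := (A ×ˢ W).image (fun p => c * p.1 + p.2) with hL
      set d : ℤ := 2 ^ (M + 1) * k with hd
      -- expand the two filters as finite sums
      have e₁ : ∀ l : ℤ, wp g h (M + 1) n₁ l = ∑ a ∈ A, u₁ a * w₁ (l - c * a) := by
        intro l
        rw [hM]; rw [wp]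
        apply finsum_eq_sum_of_support_subset
        intro a ha
        rw [mem_support] at ha
        have : uF g h n₁ a ≠ 0 := left_ne_zero_of_mul ha
        simpa [hA, Set.Finite.mem_toFinset, mem_support] using this
      have e₂ : ∀ l : ℤ, wp g h (M + 1) n₂ l = ∑ b ∈ B, u₂ b * w₂ (l - c * b) := by
        intro l
        rw [hM]; rw [wp]
        apply finsum_eq_sum_of_support_subset
        intro b hb
        rw [mem_support] at hb
        have : uF g h n₂ b ≠ 0 := left_ne_zero_of_mul hb
        simpa [hB, Set.Finite.mem_toFinset, mem_support] using this
      have hLmem : ∀ (l : ℤ), ∀ a ∈ A, w₁ (l - c * a) ≠ 0 → l ∈ L := by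
        intro l a haA hw
        rw [hL]
        apply Finset.mem_image.2
        refine ⟨(a, l - c * a), ?_, by ring⟩
        rw [Finset.mem_product]
        exact ⟨haA, by simpa [hW, Set.Finite.mem_toFinset, mem_support] using hw⟩
      calc ∑ᶠ l : ℤ, wp g h (M + 1) n₁ l * wp g h (M + 1) n₂ (l + 2 ^ (M + 1) * k)
          = ∑ᶠ l : ℤ, ∑ a ∈ A, ∑ b ∈ B,
              (u₁ a * w₁ (l - c * a)) * (u₂ b * w₂ (l + d - c * b)) := by
            apply finsum_congr; intro l
            rw [e₁ l, e₂ (l + 2 ^ (M + 1) * k), Finset.sum_mul_sum, ← hd]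
        _ = ∑ l ∈ L, ∑ a ∈ A, ∑ b ∈ B,
              (u₁ a * w₁ (l - c * a)) * (u₂ b * w₂ (l + d - c * b)) := by
            apply finsum_eq_sum_of_support_subset
            intro l hl
            rw [mem_support] at hl
            by_contra hlL
            apply hl
            apply Finset.sum_eq_zero; intro a haA
            apply Finset.sum_eq_zero; intro b _
            have : w₁ (l - c * a) = 0 := by
              by_contra hne0
              exact hlL (hLmem l a haA hne0)
            rw [this]; ring
        _ = ∑ a ∈ A, ∑ b ∈ B, ∑ l ∈ L,
              (u₁ a * w₁ (l - c * a)) * (u₂ b * w₂ (l + d - c * b)) := by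
            rw [Finset.sum_comm]
            apply Finset.sum_congr rfl; intro a _
            rw [Finset.sum_comm]
        _ = ∑ a ∈ A, ∑ b ∈ B,
              u₁ a * u₂ b * ∑ᶠ l : ℤ, w₁ (l - c * a) * w₂ (l + d - c * b) := by
            apply Finset.sum_congr rfl; intro a haA
            apply Finset.sum_congr rfl; intro b _
            have hsub : support (fun l : ℤ => w₁ (l - c * a) * w₂ (l + d - c * b)) ⊆ ↑L := by
              intro l hl
              rw [mem_support] at hl
              have : w₁ (l - c * a) ≠ 0 := fun h0 => hl (by rw [h0]; ring)
              exact hLmem l a haA this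
            have hfin2 : (support (fun l : ℤ => w₁ (l - c * a) * w₂ (l + d - c * b))).Finite :=
              Set.Finite.subset L.finite_toSet hsub
            rw [mul_finsum _ _]
            rw [finsum_eq_sum_of_support_subset _
              (s := L) (fun l hl => by
                rw [mem_support] at hl
                have : w₁ (l - c * a) ≠ 0 := fun h0 => hl (by rw [h0]; ring)
                exact hLmem l a haA this)]
            apply Finset.sum_congr rfl; intro l _
            ring
        _ = ∑ a ∈ A, ∑ b ∈ B,
              u₁ a * u₂ b * (if t₁ = t₂ ∧ 2 * k + a - b = 0 then (1 / 2 : ℝ) ^ M else 0) := by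
            apply Finset.sum_congr rfl; intro a _
            apply Finset.sum_congr rfl; intro b _
            congr 1
            have hre : ∑ᶠ l : ℤ, w₁ (l - c * a) * w₂ (l + d - c * b)
                = ∑ᶠ l : ℤ, w₁ l * w₂ (l + c * (2 * k + a - b)) := by
              rw [← finsum_comp_equiv (Equiv.addRight (c * a))
                (f := fun l : ℤ => w₁ (l - c * a) * w₂ (l + d - c * b))]
              apply finsum_congr; intro l
              simp only [Equiv.coe_addRight]
              have e1 : l + c * a - c * a = l := by ring
              have e2 : l + c * a + d - c * b = l + c * (2 * k + a - b) := by
                rw [hd, hc]; ring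
              rw [e1, e2]
            rw [hre, hw₁, hw₂, ih' t₁ t₂ hbt₁ hbt₂ (2 * k + a - b)]
        _ = if n₁ = n₂ ∧ k = 0 then (1 / 2 : ℝ) ^ (M + 1) else 0 := by
            by_cases hteq : t₁ = t₂
            · have hstep : ∀ a ∈ A, ∑ b ∈ B,
                  u₁ a * u₂ b * (if t₁ = t₂ ∧ 2 * k + a - b = 0 then (1 / 2 : ℝ) ^ M else 0)
                  = u₁ a * u₂ (a + 2 * k) * (1 / 2 : ℝ) ^ M := by
                intro a _
                have : ∀ b ∈ B,
                    u₁ a * u₂ b * (if t₁ = t₂ ∧ 2 * k + a - b = 0 then (1 / 2 : ℝ) ^ M else 0)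
                    = if b = a + 2 * k then u₁ a * u₂ b * (1 / 2 : ℝ) ^ M else 0 := by
                  intro b _
                  by_cases hbeq : b = a + 2 * k
                  · rw [if_pos hbeq, if_pos ⟨hteq, by omega⟩]
                  · rw [if_neg hbeq, if_neg (fun hc0 => hbeq (by omega))]; ring
                rw [Finset.sum_congr rfl this, Finset.sum_ite_eq' B (a + 2 * k)]
                split_ifs with hmem
                · rfl
                · have : u₂ (a + 2 * k) = 0 := by
                    by_contra h0
                    exact hmem (by simpa [hB, Set.Finite.mem_toFinset, mem_support] using h0)
                  rw [this]; ring
              rw [Finset.sum_congr rfl hstep]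
              have : ∑ a ∈ A, u₁ a * u₂ (a + 2 * k) * (1 / 2 : ℝ) ^ M
                  = (∑ᶠ a : ℤ, u₁ a * u₂ (a + 2 * k)) * (1 / 2 : ℝ) ^ M := by
                rw [finsum_eq_sum_of_support_subset _ (s := A)
                  (fun a ha => by
                    rw [mem_support] at ha
                    have : u₁ a ≠ 0 := fun h0 => ha (by rw [h0]; ring)
                    simpa [hA, Set.Finite.mem_toFinset, mem_support] using this)]
                rw [Finset.sum_mul]
              rw [this]
              by_cases hnn : n₁ = n₂
              · subst hnn
                rcases uF_eq g h n₁ with e | e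
                · rw [hu₁, hu₂, e, horth_g k]
                  by_cases hk : k = 0
                  · rw [if_pos hk, if_pos ⟨rfl, hk⟩]; ring
                  · rw [if_neg hk, if_neg (fun hc0 => hk hc0.2)]; ring
                · rw [hu₁, hu₂, e, horth_h k]
                  by_cases hk : k = 0
                  · rw [if_pos hk, if_pos ⟨rfl, hk⟩]; ring
                  · rw [if_neg hk, if_neg (fun hc0 => hk hc0.2)]; ring
              · rcases uF_sibling g h n₁ n₂ hnn (by omega) with ⟨e1, e2⟩ | ⟨e1, e2⟩
                · rw [hu₁, hu₂, e1, e2, horth_gh k, if_neg (fun hc0 => hnn hc0.1)]; ring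
                · rw [hu₁, hu₂, e1, e2, horth_hg k, if_neg (fun hc0 => hnn hc0.1)]; ring
            · have : ∀ a ∈ A, ∑ b ∈ B,
                  u₁ a * u₂ b * (if t₁ = t₂ ∧ 2 * k + a - b = 0 then (1 / 2 : ℝ) ^ M else 0)
                  = 0 := by
                intro a _
                apply Finset.sum_eq_zero; intro b _
                rw [if_neg (fun hc0 => hteq hc0.1)]; ring
              rw [Finset.sum_congr rfl this, Finset.sum_const, smul_zero,
                if_neg (fun hc0 => hteq (by rw [ht₁, ht₂, hc0.1]))]

/-- If the finitely supported filters `h` and `g` satisfy the even-shift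
orthonormality relations and are mutually orthogonal under even shifts, then wavelet
packet filters in distinct sub-bands at the same scale are orthogonal under all
`2^m`-shifts. -/
theorem stmt3 (h g : ℤ → ℝ)
    (hhfin : (Function.support h).Finite) (hgfin : (Function.support g).Finite)
    (horth_h : ∀ k : ℤ,
      ∑ᶠ l : ℤ, h l * h (l + 2 * k) = (1 / 2) * (if k = 0 then 1 else 0))
    (horth_g : ∀ k : ℤ,
      ∑ᶠ l : ℤ, g l * g (l + 2 * k) = (1 / 2) * (if k = 0 then 1 else 0))
    (horth_gh : ∀ k : ℤ, ∑ᶠ l : ℤ, g l * h (l + 2 * k) = 0)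
    (m : ℕ) (hm : 1 ≤ m) (n₁ n₂ : ℕ)
    (hn₁ : n₁ ≤ 2 ^ m - 1) (hn₂ : n₂ ≤ 2 ^ m - 1) (hne : n₁ ≠ n₂) (k : ℤ) :
    ∑ᶠ l : ℤ, wp g h m n₁ l * wp g h m n₂ (l + 2 ^ m * k) = 0 := by
  rw [key h g hhfin hgfin horth_h horth_g horth_gh m hm n₁ n₂ hn₁ hn₂ k,
    if_neg (fun hc0 => hne hc0.1)]
end

section
/- Let L be a positive even integer and let h : ℤ → ℝ satisfy h_l = 0 for l < 0 and for l ≥ L, and ∑_{l∈ℤ} h_l h_{l+2k} = (1/2)·δ_{k,0} for every integer k; define g : ℤ → ℝ by g_l = (−1)^{l+1} h_{L−1−l}. Let T be a positive integer and y : ℤ/Tℤ → ℝ, and define the circularly filtered series W_{m,n,t} = ∑_{l∈ℤ} v_{m,n,l} y_{t−(l mod T)} for t ∈ ℤ/Tℤ. Then the MODWPT preserves energy at every scale m ≥ 1: ∑_{n=0}^{2^m−1} ∑_{t∈ℤ/Tℤ} W_{m,n,t}² = ∑_{t∈ℤ/Tℤ} y_t². Consequently, if ∑_t y_t² ≠ 0,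 the empirical wavelet variance ratios ξ̂_{m,n,T} = (∑_t W_{m,n,t}²)/(∑_t y_t²) satisfy ∑_{n=0}^{2^m−1} ξ̂_{m,n,T} = 1. -/
open MeasureTheory ProbabilityTheory Filter

section helpers

variable {L : ℕ} {h g : ℤ → ℝ}

lemma support_subset_Ico {f : ℤ → ℝ} {a b : ℤ} (hf : ∀ l, l < a ∨ b ≤ l → f l = 0) :
    Function.support f ⊆ ((Finset.Ico a b : Finset ℤ) : Set ℤ) := by
  intro l hl
  simp only [Function.mem_support] at hl
  simp only [Finset.coe_Ico, Set.mem_Ico]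
  constructor
  · by_contra hc; exact hl (hf l (Or.inl (by omega)))
  · by_contra hc; exact hl (hf l (Or.inr (by omega)))

lemma sum_range_double (N : ℕ) (f : ℕ → ℝ) :
    ∑ n ∈ Finset.range (2 * N), f n
      = ∑ p ∈ Finset.range N, (f (2 * p) + f (2 * p + 1)) := by
  induction N with
  | zero => simp
  | succ N ih =>
      have h2 : 2 * (N + 1) = (2 * N) + 1 + 1 := by ring
      rw [h2, Finset.sum_range_succ, Finset.sum_range_succ, ih, Finset.sum_range_succ]
      ring

lemma gsupp (hsupp : ∀ l : ℤ, (l < 0 ∨ (L : ℤ) ≤ l) → h l = 0)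
    (hgdef : ∀ l : ℤ, g l = (-1 : ℝ) ^ (l + 1) * h ((L : ℤ) - 1 - l)) :
    ∀ l : ℤ, (l < 0 ∨ (L : ℤ) ≤ l) → g l = 0 := by
  intro l hl
  rw [hgdef, hsupp ((L : ℤ) - 1 - l) (by omega), mul_zero]

lemma uF_supp (hsupp : ∀ l : ℤ, (l < 0 ∨ (L : ℤ) ≤ l) → h l = 0)
    (hgs : ∀ l : ℤ, (l < 0 ∨ (L : ℤ) ≤ l) → g l = 0) (n : ℕ) :
    ∀ k : ℤ, (k < 0 ∨ (L : ℤ) ≤ k) → uF g h n k = 0 := by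
  intro k hk
  unfold uF
  split
  · exact hgs k hk
  · exact hsupp k hk

lemma key_identity (_hLpos : 0 < L)
    (hsupp : ∀ l : ℤ, (l < 0 ∨ (L : ℤ) ≤ l) → h l = 0)
    (horth_h : ∀ k : ℤ,
      ∑ᶠ l : ℤ, h l * h (l + 2 * k) = (1 / 2) * (if k = 0 then 1 else 0))
    (hgdef : ∀ l : ℤ, g l = (-1 : ℝ) ^ (l + 1) * h ((L : ℤ) - 1 - l)) :
    ∀ d : ℤ, (∑ᶠ l : ℤ, (g l * g (l + d) + h l * h (l + d)))
      = if d = 0 then 1 else 0 := by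
  have hgs := gsupp hsupp hgdef
  intro d
  have hHfin : (Function.support fun l : ℤ => h l * h (l + d)).Finite :=
    Set.Finite.subset (Finset.finite_toSet _)
      (support_subset_Ico (a := 0) (b := L) fun l hl => by rw [hsupp l hl, zero_mul])
  have hGfin : (Function.support fun l : ℤ => g l * g (l + d)).Finite :=
    Set.Finite.subset (Finset.finite_toSet _)
      (support_subset_Ico (a := 0) (b := L) fun l hl => by rw [hgs l hl, zero_mul])
  have step1 : (∑ᶠ l : ℤ, g l * g (l + d))
      = (-1 : ℝ) ^ d * ∑ᶠ l : ℤ, h l * h (l + d) := by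
    rw [mul_finsum _ _]
    rw [← finsum_comp_equiv (Equiv.subLeft ((L : ℤ) - 1 - d))
      (f := fun l => g l * g (l + d))]
    refine finsum_congr fun l => ?_
    have e1 : (Equiv.subLeft ((L : ℤ) - 1 - d)) l = (L : ℤ) - 1 - d - l := rfl
    rw [e1, hgdef, hgdef]
    have harg1 : (L : ℤ) - 1 - ((L : ℤ) - 1 - d - l) = l + d := by ring
    have harg2 : (L : ℤ) - 1 - (((L : ℤ) - 1 - d - l) + d) = l := by ring
    rw [harg1, harg2]
    have hsign : (-1 : ℝ) ^ (((L : ℤ) - 1 - d - l) + 1)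
        * (-1 : ℝ) ^ ((((L : ℤ) - 1 - d - l) + d) + 1) = (-1 : ℝ) ^ d := by
      rw [← zpow_add₀ (by norm_num : (-1 : ℝ) ≠ 0)]
      have he : (((L : ℤ) - 1 - d - l) + 1) + ((((L : ℤ) - 1 - d - l) + d) + 1)
          = 2 * ((L : ℤ) - d - l) + d := by ring
      rw [he, zpow_add₀ (by norm_num : (-1 : ℝ) ≠ 0),
        (even_two_mul ((L : ℤ) - d - l)).neg_one_zpow, one_mul]
    rw [← hsign]; ring
  rw [finsum_add_distrib hGfin hHfin, step1]
  rcases Int.even_or_odd d with ⟨k, hk⟩ | ⟨k, hk⟩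
  · have hd : d = 2 * k := by omega
    subst hd
    rw [horth_h k, (even_two_mul k).neg_one_zpow, one_mul]
    by_cases hk0 : k = 0
    · subst hk0; norm_num
    · have : ¬(2 * k = (0 : ℤ)) := by omega
      simp [hk0, this]
  · have hd : d = 2 * k + 1 := by omega
    subst hd
    have hodd : Odd (2 * k + 1 : ℤ) := ⟨k, by ring⟩
    rw [hodd.neg_one_zpow]
    have : ¬(2 * k + 1 = (0 : ℤ)) := by omega
    simp [this]


lemma wp_supp (hsupp : ∀ l : ℤ, (l < 0 ∨ (L : ℤ) ≤ l) → h l = 0)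
    (hgs : ∀ l : ℤ, (l < 0 ∨ (L : ℤ) ≤ l) → g l = 0) :
    ∀ m n (l : ℤ), (l < 0 ∨ (2 ^ m * L : ℤ) ≤ l) → wp g h m n l = 0 := by
  intro m
  induction m using Nat.strong_induction_on with
  | _ m ih =>
    match m with
    | 0 => intro n l _; simp [wp]
    | 1 =>
        intro n l hl
        have hl' : l < 0 ∨ (L : ℤ) ≤ l := by
          rcases hl with hl | hl
          · exact Or.inl hl
          · right; have : (2 : ℤ) ^ 1 * L = 2 * L := by norm_num
            omega
        simp only [wp]
        split
        · exact hgs l hl'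
        · exact hsupp l hl'
    | (m + 2) =>
        intro n l hl
        have heq : wp g h (m + 2) n l
            = ∑ᶠ k : ℤ, uF g h n k * wp g h (m + 1) (n / 2) (l - 2 ^ (m + 1) * k) := by
          simp [wp]
        rw [heq]
        apply finsum_eq_zero_of_forall_eq_zero
        intro k
        by_cases hk : 0 ≤ k ∧ k < (L : ℤ)
        · have hp : (0 : ℤ) < 2 ^ (m + 1) := by positivity
          have h2 : (2 : ℤ) ^ (m + 2) = 2 * 2 ^ (m + 1) := by ring
          have hkL : 2 ^ (m + 1) * k ≤ 2 ^ (m + 1) * ((L : ℤ) - 1) :=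
            mul_le_mul_of_nonneg_left (by omega) hp.le
          have hk0 : 0 ≤ 2 ^ (m + 1) * k := mul_nonneg hp.le hk.1
          have hbound : (l - 2 ^ (m + 1) * k < 0)
              ∨ (2 ^ (m + 1) * (L : ℤ) ≤ l - 2 ^ (m + 1) * k) := by
            rcases hl with hl | hl
            · left; omega
            · right; rw [h2] at hl; nlinarith
          rw [ih (m + 1) (by omega) (n / 2) _ hbound, mul_zero]
        · rw [uF_supp hsupp hgs n k (by omega), zero_mul]

/-- Circularly filtered series `W_{m,n,t}`. -/
noncomputable def Wfun (g h : ℤ → ℝ) (T : ℕ) (y : ZMod T → ℝ) (m n : ℕ) (t : ZMod T) : ℝ :=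
  ∑ᶠ l : ℤ, wp g h m n l * y (t - (l : ZMod T))

lemma Wfun_rec (hsupp : ∀ l : ℤ, (l < 0 ∨ (L : ℤ) ≤ l) → h l = 0)
    (hgs : ∀ l : ℤ, (l < 0 ∨ (L : ℤ) ≤ l) → g l = 0)
    {T : ℕ} [NeZero T] (y : ZMod T → ℝ) (m n : ℕ) (t : ZMod T) :
    Wfun g h T y (m + 2) n t
      = ∑ᶠ k : ℤ, uF g h n k
          * Wfun g h T y (m + 1) (n / 2) (t - (((2 : ℤ) ^ (m + 1) * k : ℤ) : ZMod T)) := by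
  have husupp := uF_supp hsupp hgs n
  have hwps := wp_supp hsupp hgs (m + 1) (n / 2)
  set s : ℤ := 2 ^ (m + 1) with hs
  set K : Finset ℤ := Finset.Ico (0 : ℤ) L with hKdef
  set S : Finset ℤ := Finset.Ico (0 : ℤ) (2 ^ (m + 2) * L) with hSdef
  have hp : (0 : ℤ) < s := by positivity
  have h2 : (2 : ℤ) ^ (m + 2) = 2 * s := by rw [hs]; ring
  have hstep1 : ∀ l : ℤ, wp g h (m + 2) n l
      = ∑ k ∈ K, uF g h n k * wp g h (m + 1) (n / 2) (l - s * k) := by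
    intro l
    have heq : wp g h (m + 2) n l
        = ∑ᶠ k : ℤ, uF g h n k * wp g h (m + 1) (n / 2) (l - s * k) := by
      simp [wp, hs]
    rw [heq]
    exact finsum_eq_finset_sum_of_support_subset _
      (support_subset_Ico fun k hk => by rw [husupp k hk, zero_mul])
  have hWdef : Wfun g h T y (m + 2) n t
      = ∑ᶠ l : ℤ, ∑ k ∈ K,
          uF g h n k * wp g h (m + 1) (n / 2) (l - s * k) * y (t - (l : ZMod T)) := by
    unfold Wfun
    refine finsum_congr fun l => ?_
    rw [hstep1 l, Finset.sum_mul]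
  rw [hWdef]
  have houter : (Function.support fun l : ℤ => ∑ k ∈ K,
      uF g h n k * wp g h (m + 1) (n / 2) (l - s * k) * y (t - (l : ZMod T)))
      ⊆ ((S : Finset ℤ) : Set ℤ) := by
    apply support_subset_Ico
    intro l hl
    apply Finset.sum_eq_zero
    intro k hkK
    have hkb : 0 ≤ k ∧ k < (L : ℤ) := by
      rw [hKdef, Finset.mem_Ico] at hkK; exact hkK
    have hkL : s * k ≤ s * ((L : ℤ) - 1) := mul_le_mul_of_nonneg_left (by omega) hp.le
    have hk0 : 0 ≤ s * k := mul_nonneg hp.le hkb.1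
    have : wp g h (m + 1) (n / 2) (l - s * k) = 0 := by
      apply hwps
      rcases hl with hl | hl
      · left; omega
      · right; rw [h2] at hl; nlinarith
    rw [this, mul_zero, zero_mul]
  rw [finsum_eq_finset_sum_of_support_subset _ houter, Finset.sum_comm]
  rw [finsum_eq_finset_sum_of_support_subset
    (fun k : ℤ => uF g h n k * Wfun g h T y (m + 1) (n / 2) (t - ((s * k : ℤ) : ZMod T)))
    (s := K) (support_subset_Ico fun k hk => by rw [husupp k hk, zero_mul])]
  refine Finset.sum_congr rfl fun k hkK => ?_
  have hkb : 0 ≤ k ∧ k < (L : ℤ) := by rw [hKdef, Finset.mem_Ico] at hkK; exact hkK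
  have hassoc : ∀ l ∈ S, uF g h n k * wp g h (m + 1) (n / 2) (l - s * k) * y (t - (l : ZMod T))
      = uF g h n k * (wp g h (m + 1) (n / 2) (l - s * k) * y (t - (l : ZMod T))) :=
    fun l _ => mul_assoc _ _ _
  rw [Finset.sum_congr rfl hassoc, ← Finset.mul_sum]
  congr 1
  have hsub : (Function.support fun l : ℤ =>
      wp g h (m + 1) (n / 2) (l - s * k) * y (t - (l : ZMod T))) ⊆ ((S : Finset ℤ) : Set ℤ) := by
    apply support_subset_Ico
    intro l hl
    have hkL : s * k ≤ s * ((L : ℤ) - 1) := mul_le_mul_of_nonneg_left (by omega) hp.le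
    have hk0 : 0 ≤ s * k := mul_nonneg hp.le hkb.1
    have : wp g h (m + 1) (n / 2) (l - s * k) = 0 := by
      apply hwps
      rcases hl with hl | hl
      · left; omega
      · right; rw [h2] at hl; nlinarith
    rw [this, zero_mul]
  rw [← finsum_eq_finset_sum_of_support_subset _ hsub]
  unfold Wfun
  conv_lhs => rw [← finsum_comp_equiv (Equiv.addRight (s * k))
    (f := fun l => wp g h (m + 1) (n / 2) (l - s * k) * y (t - (l : ZMod T)))]
  refine finsum_congr fun j => ?_
  have he : (Equiv.addRight (s * k)) j = j + s * k := rfl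
  rw [he]
  have h1 : j + s * k - s * k = j := by ring
  rw [h1]
  congr 2
  push_cast
  ring


lemma energy (hLpos : 0 < L)
    (hsupp : ∀ l : ℤ, (l < 0 ∨ (L : ℤ) ≤ l) → h l = 0)
    (hgs : ∀ l : ℤ, (l < 0 ∨ (L : ℤ) ≤ l) → g l = 0)
    (key : ∀ d : ℤ, (∑ᶠ l : ℤ, (g l * g (l + d) + h l * h (l + d)))
      = if d = 0 then 1 else 0)
    {T : ℕ} [NeZero T] (x : ZMod T → ℝ) (s : ℤ) :
    ((∑ t : ZMod T, (∑ᶠ k : ℤ, g k * x (t - ((s * k : ℤ) : ZMod T))) ^ 2)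
      + ∑ t : ZMod T, (∑ᶠ k : ℤ, h k * x (t - ((s * k : ℤ) : ZMod T))) ^ 2)
      = ∑ t : ZMod T, x t ^ 2 := by
  set K : Finset ℤ := Finset.Ico (0 : ℤ) L with hKdef
  set D : Finset ℤ := Finset.Ioo (-(L : ℤ)) L with hDdef
  set C : ℤ → ℝ := fun d => ∑ t : ZMod T, x t * x (t - (d : ZMod T)) with hCdef
  have shift : ∀ (a b : ℤ), (∑ t : ZMod T, x (t - (a : ZMod T)) * x (t - (b : ZMod T)))
      = C (b - a) := by
    intro a b
    rw [hCdef]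
    refine Fintype.sum_equiv (Equiv.addRight ((a : ℤ) : ZMod T))
      (fun t => x t * x (t - ((b - a : ℤ) : ZMod T)))
      (fun t => x (t - (a : ZMod T)) * x (t - (b : ZMod T))) ?_ |>.symm
    intro t
    have he : (Equiv.addRight ((a : ℤ) : ZMod T)) t = t + ((a : ℤ) : ZMod T) := rfl
    beta_reduce
    have h1 : t + ((a : ℤ) : ZMod T) - ((a : ℤ) : ZMod T) = t := by ring_nf
    have h2 : t + ((a : ℤ) : ZMod T) - ((b : ℤ) : ZMod T)
        = t - (((b - a : ℤ)) : ZMod T) := by push_cast; ring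
    rw [he, h1, h2]
  have sq_expand : ∀ (f : ℤ → ℝ), (∀ l : ℤ, (l < 0 ∨ (L : ℤ) ≤ l) → f l = 0) →
      (∑ t : ZMod T, (∑ᶠ k : ℤ, f k * x (t - ((s * k : ℤ) : ZMod T))) ^ 2)
        = ∑ k ∈ K, ∑ k' ∈ K, (f k * f k') * C (s * (k' - k)) := by
    intro f hf
    have conv1 : ∀ t : ZMod T, (∑ᶠ k : ℤ, f k * x (t - ((s * k : ℤ) : ZMod T)))
        = ∑ k ∈ K, f k * x (t - ((s * k : ℤ) : ZMod T)) := fun t =>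
      finsum_eq_finset_sum_of_support_subset _
        (support_subset_Ico fun l hl => by rw [hf l hl, zero_mul])
    have conv2 : ∀ t : ZMod T, (∑ᶠ k : ℤ, f k * x (t - ((s * k : ℤ) : ZMod T))) ^ 2
        = ∑ k ∈ K, ∑ k' ∈ K, (f k * x (t - ((s * k : ℤ) : ZMod T)))
            * (f k' * x (t - ((s * k' : ℤ) : ZMod T))) := by
      intro t
      rw [conv1 t, sq, Finset.sum_mul_sum]
    rw [Finset.sum_congr rfl fun t _ => conv2 t, Finset.sum_comm]
    refine Finset.sum_congr rfl fun k _ => ?_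
    rw [Finset.sum_comm]
    refine Finset.sum_congr rfl fun k' _ => ?_
    have : ∀ t : ZMod T, (f k * x (t - ((s * k : ℤ) : ZMod T)))
        * (f k' * x (t - ((s * k' : ℤ) : ZMod T)))
        = (f k * f k') * (x (t - ((s * k : ℤ) : ZMod T)) * x (t - ((s * k' : ℤ) : ZMod T))) :=
      fun t => by ring
    rw [Finset.sum_congr rfl fun t _ => this t, ← Finset.mul_sum, shift (s * k) (s * k')]
    congr 1
    ring
  rw [sq_expand g hgs, sq_expand h hsupp, ← Finset.sum_add_distrib]
  have hcomb : ∀ k ∈ K, ((∑ k' ∈ K, (g k * g k') * C (s * (k' - k)))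
      + ∑ k' ∈ K, (h k * h k') * C (s * (k' - k)))
      = ∑ k' ∈ K, (g k * g k' + h k * h k') * C (s * (k' - k)) := by
    intro k _
    rw [← Finset.sum_add_distrib]
    exact Finset.sum_congr rfl fun k' _ => by ring
  rw [Finset.sum_congr rfl hcomb]
  have reindex : ∀ k ∈ K, (∑ k' ∈ K, (g k * g k' + h k * h k') * C (s * (k' - k)))
      = ∑ d ∈ D, (g k * g (k + d) + h k * h (k + d)) * C (s * d) := by
    intro k hkK
    have hkb : 0 ≤ k ∧ k < (L : ℤ) := by rw [hKdef, Finset.mem_Ico] at hkK; exact hkK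
    set F : ℤ → ℝ := fun k' => (g k * g k' + h k * h k') * C (s * (k' - k)) with hF
    have hsupF : Function.support F ⊆ ((K : Finset ℤ) : Set ℤ) :=
      support_subset_Ico fun k' hb => by
        rw [hF]; simp only; rw [hgs k' hb, hsupp k' hb, mul_zero, mul_zero, add_zero, zero_mul]
    have e1 : (∑ k' ∈ K, F k') = ∑ᶠ k' : ℤ, F k' :=
      (finsum_eq_finset_sum_of_support_subset F hsupF).symm
    have hsubset : Function.support F
        ⊆ ((D.map (Equiv.toEmbedding (Equiv.addLeft k)) : Finset ℤ) : Set ℤ) := by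
      intro k' hk'2
      have hmem := hsupF hk'2
      rw [hKdef] at hmem
      simp only [Finset.coe_Ico, Set.mem_Ico] at hmem
      simp only [Finset.coe_map, Set.mem_image, Finset.mem_coe, Equiv.coe_toEmbedding,
        Equiv.coe_addLeft]
      refine ⟨k' - k, ?_, by ring⟩
      rw [hDdef, Finset.mem_Ioo]
      omega
    have e2 : (∑ᶠ k' : ℤ, F k') = ∑ k' ∈ D.map (Equiv.toEmbedding (Equiv.addLeft k)), F k' :=
      finsum_eq_finset_sum_of_support_subset F hsubset
    rw [e1, e2, Finset.sum_map]
    refine Finset.sum_congr rfl fun d _ => ?_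
    simp only [Equiv.coe_toEmbedding, Equiv.coe_addLeft, hF]
    have harg : k + d - k = d := by ring
    rw [harg]
  rw [Finset.sum_congr rfl reindex, Finset.sum_comm]
  have inner : ∀ d ∈ D, (∑ k ∈ K, (g k * g (k + d) + h k * h (k + d)) * C (s * d))
      = (if d = 0 then 1 else 0) * C (s * d) := by
    intro d _
    rw [← Finset.sum_mul]
    congr 1
    rw [← key d]
    exact (finsum_eq_finset_sum_of_support_subset _
      (support_subset_Ico fun l hl => by
        rw [hgs l hl, hsupp l hl, zero_mul, zero_mul, add_zero])).symm
  rw [Finset.sum_congr rfl inner]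
  have hsum : (∑ d ∈ D, (if d = 0 then 1 else 0) * C (s * d))
      = ∑ d ∈ D, (if d = (0 : ℤ) then C (s * d) else 0) := by
    refine Finset.sum_congr rfl fun d _ => ?_
    split <;> simp
  rw [hsum, Finset.sum_ite_eq' D (0 : ℤ) (fun d => C (s * d))]
  have h0D : (0 : ℤ) ∈ D := by rw [hDdef, Finset.mem_Ioo]; omega
  rw [if_pos h0D, mul_zero, hCdef]
  simp only [Int.cast_zero, sub_zero]
  exact Finset.sum_congr rfl fun t _ => (sq (x t)).symm

end helpers

/-- Under the wavelet-filter conditions, the MODWPT applied circularly to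
a series `y : ℤ/Tℤ → ℝ` preserves energy at every scale `m ≥ 1`:
`∑_{n=0}^{2^m-1} ∑_t W_{m,n,t}² = ∑_t y_t²`; consequently, if `∑_t y_t² ≠ 0`,
the empirical wavelet variance ratios sum to 1. -/
theorem stmt8 (L : ℕ) (hLpos : 0 < L) (hLeven : Even L)
    (h : ℤ → ℝ)
    (hsupp : ∀ l : ℤ, (l < 0 ∨ (L : ℤ) ≤ l) → h l = 0)
    (horth_h : ∀ k : ℤ,
      ∑ᶠ l : ℤ, h l * h (l + 2 * k) = (1 / 2) * (if k = 0 then 1 else 0))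
    (g : ℤ → ℝ) (hgdef : ∀ l : ℤ, g l = (-1 : ℝ) ^ (l + 1) * h ((L : ℤ) - 1 - l))
    (T : ℕ) [NeZero T] (y : ZMod T → ℝ) (m : ℕ) (hm : 1 ≤ m) :
    (∑ n ∈ Finset.range (2 ^ m), ∑ t : ZMod T,
        (∑ᶠ l : ℤ, wp g h m n l * y (t - (l : ZMod T))) ^ 2
      = ∑ t : ZMod T, (y t) ^ 2)
    ∧ ((∑ t : ZMod T, (y t) ^ 2) ≠ 0 →
        ∑ n ∈ Finset.range (2 ^ m),
          (∑ t : ZMod T, (∑ᶠ l : ℤ, wp g h m n l * y (t - (l : ZMod T))) ^ 2)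
            / (∑ t : ZMod T, (y t) ^ 2) = 1) := by
  have hgs := gsupp hsupp hgdef
  have key := key_identity hLpos hsupp horth_h hgdef
  have main : ∀ M : ℕ, 1 ≤ M →
      (∑ n ∈ Finset.range (2 ^ M), ∑ t : ZMod T, (Wfun g h T y M n t) ^ 2)
        = ∑ t : ZMod T, (y t) ^ 2 := by
    intro M hM
    induction M, hM using Nat.le_induction with
    | base =>
        rw [pow_one, Finset.sum_range_succ, Finset.sum_range_one]
        have h0 : ∀ t : ZMod T, Wfun g h T y 1 0 t
            = ∑ᶠ l : ℤ, g l * y (t - (((1 : ℤ) * l : ℤ) : ZMod T)) := by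
          intro t
          unfold Wfun
          refine finsum_congr fun l => ?_
          rw [one_mul]
          simp [wp]
        have h1 : ∀ t : ZMod T, Wfun g h T y 1 1 t
            = ∑ᶠ l : ℤ, h l * y (t - (((1 : ℤ) * l : ℤ) : ZMod T)) := by
          intro t
          unfold Wfun
          refine finsum_congr fun l => ?_
          rw [one_mul]
          simp [wp]
        have e0 : (∑ t : ZMod T, Wfun g h T y 1 0 t ^ 2)
            = ∑ t : ZMod T, (∑ᶠ l : ℤ, g l * y (t - (((1 : ℤ) * l : ℤ) : ZMod T))) ^ 2 :=
          Finset.sum_congr rfl fun t _ => by rw [h0 t]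
        have e1 : (∑ t : ZMod T, Wfun g h T y 1 1 t ^ 2)
            = ∑ t : ZMod T, (∑ᶠ l : ℤ, h l * y (t - (((1 : ℤ) * l : ℤ) : ZMod T))) ^ 2 :=
          Finset.sum_congr rfl fun t _ => by rw [h1 t]
        rw [e0, e1]
        exact energy hLpos hsupp hgs key y 1
    | succ M hM ih =>
        obtain ⟨M', rfl⟩ : ∃ M', M = M' + 1 := ⟨M - 1, by omega⟩
        rw [show (2 : ℕ) ^ (M' + 1 + 1) = 2 * 2 ^ (M' + 1) by ring, sum_range_double, ← ih]
        refine Finset.sum_congr rfl fun p hp => ?_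
        have hdiv0 : (2 * p) / 2 = p := by omega
        have hdiv1 : (2 * p + 1) / 2 = p := by omega
        have hrec0 := Wfun_rec hsupp hgs y M' (2 * p)
        have hrec1 := Wfun_rec hsupp hgs y M' (2 * p + 1)
        rw [hdiv0] at hrec0
        rw [hdiv1] at hrec1
        set x : ZMod T → ℝ := Wfun g h T y (M' + 1) p with hx
        rcases Nat.even_or_odd p with ⟨q, hq⟩ | ⟨q, hq⟩
        · have hu0 : uF g h (2 * p) = fun l : ℤ => g l := by
            funext l
            unfold uF
            rw [if_pos (Or.inl (by omega))]
          have hu1 : uF g h (2 * p + 1) = fun l : ℤ => h l := by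
            funext l
            unfold uF
            rw [if_neg (by omega)]
          have e0 : (∑ t : ZMod T, Wfun g h T y (M' + 1 + 1) (2 * p) t ^ 2)
              = ∑ t : ZMod T, (∑ᶠ k : ℤ,
                  g k * x (t - (((2 : ℤ) ^ (M' + 1) * k : ℤ) : ZMod T))) ^ 2 :=
            Finset.sum_congr rfl fun t _ => by
              rw [show Wfun g h T y (M' + 1 + 1) (2 * p) t
                = Wfun g h T y (M' + 2) (2 * p) t from rfl, hrec0 t]
              simp only [hu0]
          have e1 : (∑ t : ZMod T, Wfun g h T y (M' + 1 + 1) (2 * p + 1) t ^ 2)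
              = ∑ t : ZMod T, (∑ᶠ k : ℤ,
                  h k * x (t - (((2 : ℤ) ^ (M' + 1) * k : ℤ) : ZMod T))) ^ 2 :=
            Finset.sum_congr rfl fun t _ => by
              rw [show Wfun g h T y (M' + 1 + 1) (2 * p + 1) t
                = Wfun g h T y (M' + 2) (2 * p + 1) t from rfl, hrec1 t]
              simp only [hu1]
          rw [e0, e1]
          exact energy hLpos hsupp hgs key x ((2 : ℤ) ^ (M' + 1))
        · have hu0 : uF g h (2 * p) = fun l : ℤ => h l := by
            funext l
            unfold uF
            rw [if_neg (by omega)]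
          have hu1 : uF g h (2 * p + 1) = fun l : ℤ => g l := by
            funext l
            unfold uF
            rw [if_pos (Or.inr (by omega))]
          have e0 : (∑ t : ZMod T, Wfun g h T y (M' + 1 + 1) (2 * p) t ^ 2)
              = ∑ t : ZMod T, (∑ᶠ k : ℤ,
                  h k * x (t - (((2 : ℤ) ^ (M' + 1) * k : ℤ) : ZMod T))) ^ 2 :=
            Finset.sum_congr rfl fun t _ => by
              rw [show Wfun g h T y (M' + 1 + 1) (2 * p) t
                = Wfun g h T y (M' + 2) (2 * p) t from rfl, hrec0 t]
              simp only [hu0]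
          have e1 : (∑ t : ZMod T, Wfun g h T y (M' + 1 + 1) (2 * p + 1) t ^ 2)
              = ∑ t : ZMod T, (∑ᶠ k : ℤ,
                  g k * x (t - (((2 : ℤ) ^ (M' + 1) * k : ℤ) : ZMod T))) ^ 2 :=
            Finset.sum_congr rfl fun t _ => by
              rw [show Wfun g h T y (M' + 1 + 1) (2 * p + 1) t
                = Wfun g h T y (M' + 2) (2 * p + 1) t from rfl, hrec1 t]
              simp only [hu1]
          rw [e0, e1, add_comm]
          exact energy hLpos hsupp hgs key x ((2 : ℤ) ^ (M' + 1))
  have hmain := main m hm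
  have hWeq : (∑ n ∈ Finset.range (2 ^ m), ∑ t : ZMod T,
      (∑ᶠ l : ℤ, wp g h m n l * y (t - (l : ZMod T))) ^ 2)
      = ∑ n ∈ Finset.range (2 ^ m), ∑ t : ZMod T, (Wfun g h T y m n t) ^ 2 := rfl
  constructor
  · rw [hWeq]; exact hmain
  · intro hne
    rw [← Finset.sum_div, hWeq, hmain, div_self hne]
end
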